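/- arXiv:0908.0689 — 6 statements merged into one kernel-verified Lean document; each statement's English description precedes it below -/
import Mathlib

section
/- Let H be a finite-dimensional complex inner product space, V and W' subspaces with V ∩ W' = {0}, S = V + W', W the orthogonal complement of W' in S, and P_W the orthogonal projection onto W. Let v_1, …, v_M be a basis of V, u_i = P_W v_i, and G the M×M Gram matrix G_{ij} = ⟨u_i, u_j⟩. Then G is invertible, and the measurement vectors w_i = Σ_{j=1}^M (G⁻¹)_{ji} u_j satisfy the biorthogonality relations ⟨w_i, u_j⟩ = δ_{ij} for all i, j = 1, …, M, and each w_i lies in W. -/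
open scoped ComplexInnerProductSpace
open Matrix

/-- For a basis `v_1, …, v_M` of `V`, with `u_i = P_W v_i` and `G` the Gram
matrix `G i j = ⟨u_i, u_j⟩`, the matrix `G` is invertible and the measurement vectors
`w_i = ∑ j (G⁻¹) j i • u_j` satisfy `⟨w_i, u_j⟩ = δ_{ij}` and lie in `W`. -/
theorem stmt_3 {H : Type*} [NormedAddCommGroup H] [InnerProductSpace ℂ H]
    [FiniteDimensional ℂ H] (V W' : Submodule ℂ H) (hdisj : V ⊓ W' = ⊥)
    {M : ℕ} (v : Fin M → H) (hvli : LinearIndependent ℂ v)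
    (hv : Submodule.span ℂ (Set.range v) = V)
    (u : Fin M → H)
    (hu : ∀ i, u i =
      (Submodule.orthogonalProjectionOnto (W'ᗮ ⊓ (V ⊔ W') : Submodule ℂ H) (v i) : H))
    (G : Matrix (Fin M) (Fin M) ℂ) (hG : ∀ i j, G i j = ⟪u i, u j⟫)
    (w : Fin M → H) (hw : ∀ i, w i = ∑ j, G⁻¹ j i • u j) :
    IsUnit G ∧
      (∀ i j, ⟪w i, u j⟫ = if i = j then (1 : ℂ) else 0) ∧
      (∀ i, w i ∈ (W'ᗮ ⊓ (V ⊔ W') : Submodule ℂ H)) := by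
  set Wsub : Submodule ℂ H := W'ᗮ ⊓ (V ⊔ W') with hWsub
  have huW : ∀ i, u i ∈ Wsub := by
    intro i
    rw [hu i]
    exact (Submodule.orthogonalProjectionOnto Wsub (v i)).2
  have hvV : ∀ i, v i ∈ V := by
    intro i
    rw [← hv]
    exact Submodule.subset_span ⟨i, rfl⟩
  -- linear independence of u
  have huli : LinearIndependent ℂ u := by
    rw [Fintype.linearIndependent_iff] at hvli ⊢
    intro c hc
    set x : H := ∑ i, c i • v i with hx
    have hxV : x ∈ V := Submodule.sum_mem _ fun i _ => Submodule.smul_mem _ _ (hvV i)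
    have hproj : Submodule.orthogonalProjectionOnto Wsub x = 0 := by
      have : ((Submodule.orthogonalProjectionOnto Wsub x : Wsub) : H) = ∑ i, c i • u i := by
        rw [hx, map_sum]
        push_cast
        refine Finset.sum_congr rfl fun i _ => ?_
        rw [_root_.map_smul, hu i]
        rfl
      have h0 : ((Submodule.orthogonalProjectionOnto Wsub x : Wsub) : H) = 0 := by rw [this, hc]
      exact Subtype.ext h0
    have hxperp : x ∈ Wsubᗮ := Submodule.orthogonalProjectionOnto_eq_zero_iff.mp hproj
    -- decompose x with respect to W'
    set a : H := (Submodule.orthogonalProjectionOnto W' x : H) with ha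
    have haW' : a ∈ W' := (Submodule.orthogonalProjectionOnto W' x).2
    have hbW' : x - a ∈ W'ᗮ := Submodule.sub_starProjection_mem_orthogonal (K := W') x
    have hbS : x - a ∈ (V ⊔ W' : Submodule ℂ H) :=
      Submodule.sub_mem _ (Submodule.mem_sup_left hxV) (Submodule.mem_sup_right haW')
    have hbW : x - a ∈ Wsub := ⟨hbW', hbS⟩
    have hba : ⟪x - a, a⟫ = 0 := by
      rw [← inner_conj_symm, hbW' a haW', map_zero]
    have hbx : ⟪x - a, x⟫ = 0 := hxperp (x - a) hbW
    have hb0 : x - a = 0 := by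
      have : ⟪x - a, x - a⟫ = 0 := by
        rw [inner_sub_right, hbx, hba, sub_zero]
      exact inner_self_eq_zero.mp this
    have hxW' : x ∈ W' := by
      rw [sub_eq_zero.mp hb0]; exact haW'
    have hx0 : x = 0 := by
      have : x ∈ V ⊓ W' := ⟨hxV, hxW'⟩
      rw [hdisj] at this
      simpa using this
    exact hvli c hx0
  -- kernel of mulVec is trivial
  have hker : ∀ c : Fin M → ℂ, G *ᵥ c = 0 → c = 0 := by
    intro c hc
    have hy : ∀ i, ⟪u i, ∑ j, c j • u j⟫ = 0 := by
      intro i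
      have := congrFun hc i
      simpa [Matrix.mulVec, dotProduct, hG, inner_sum, inner_smul_right,
        mul_comm] using this
    have hsum : (∑ j, c j • u j) = 0 := by
      have h0 : ⟪∑ j, c j • u j, ∑ j, c j • u j⟫ = 0 := by
        rw [sum_inner]
        simp [inner_smul_left, hy]
      exact inner_self_eq_zero.mp h0
    funext i
    exact Fintype.linearIndependent_iff.mp huli c hsum i
  have hGU : IsUnit G := by
    rw [← Matrix.mulVec_injective_iff_isUnit]
    intro c d h
    have : G *ᵥ (c - d) = 0 := by
      rw [Matrix.mulVec_sub, h, sub_self]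
    have := hker _ this
    exact sub_eq_zero.mp this
  have hGdet : IsUnit G.det := (Matrix.isUnit_iff_isUnit_det G).mp hGU
  -- G is Hermitian
  have hGh : G.IsHermitian := by
    ext i j
    simp [Matrix.conjTranspose_apply, hG, inner_conj_symm]
  have hGinvh : (G⁻¹).IsHermitian := hGh.inv
  refine ⟨hGU, ?_, ?_⟩
  · intro i j
    rw [hw i, sum_inner]
    have : ∀ k, ⟪G⁻¹ k i • u k, u j⟫ = G⁻¹ i k * G k j := by
      intro k
      rw [inner_smul_left, hG]
      congr 1
      have := congrFun (congrFun hGinvh i) k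
      rw [Matrix.conjTranspose_apply] at this
      exact this
    simp_rw [this]
    have : (G⁻¹ * G) i j = if i = j then 1 else 0 := by
      rw [Matrix.nonsing_inv_mul G hGdet, Matrix.one_apply]
    rw [← this, Matrix.mul_apply]
  · intro i
    rw [hw i]
    exact Submodule.sum_mem _ fun j _ => Submodule.smul_mem _ _ (huW j)
end

section
/- Let H be a finite-dimensional complex inner product space, V and W' subspaces with V ∩ W' = {0}, S = V + W', W the orthogonal complement of W' in S, and P_W the orthogonal projection onto W. Let v_1, …, v_M be a basis of V, u_i = P_W v_i, G the (invertible) Gram matrix G_{ij} = ⟨u_i, u_j⟩, and w_i = Σ_j (G⁻¹)_{ji} u_j. Define the linear operator E on H by E x = Σ_{i=1}^M ⟨w_i, x⟩ v_i. Then: (i) E² = E (E is idempotent); (ii) E f = f for every f ∈ V; (iii) E g = 0 for every g ∈ W'. Hence E is the oblique projector onto V along W'. -/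
open scoped ComplexInnerProductSpace

/-- With a basis `v` of `V`, `u_i = P_W v_i`, Gram matrix `G`, and
measurement vectors `w_i = ∑ j (G⁻¹) j i • u_j`, the operator
`E x = ∑ i ⟨w_i, x⟩ • v_i` is idempotent, acts as the identity on `V`, and vanishes
on `W'`; i.e. `E` is the oblique projector onto `V` along `W'`. -/
theorem stmt_4 {H : Type*} [NormedAddCommGroup H] [InnerProductSpace ℂ H]
    [FiniteDimensional ℂ H] (V W' : Submodule ℂ H) (hdisj : V ⊓ W' = ⊥)
    {M : ℕ} (v : Fin M → H) (hvli : LinearIndependent ℂ v)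
    (hv : Submodule.span ℂ (Set.range v) = V)
    (u : Fin M → H)
    (hu : ∀ i, u i =
      (Submodule.orthogonalProjection (W'ᗮ ⊓ (V ⊔ W') : Submodule ℂ H) (v i) : H))
    (G : Matrix (Fin M) (Fin M) ℂ) (hG : ∀ i j, G i j = ⟪u i, u j⟫)
    (w : Fin M → H) (hw : ∀ i, w i = ∑ j, G⁻¹ j i • u j)
    (E : H → H) (hE : ∀ x, E x = ∑ i, ⟪w i, x⟫ • v i) :
    (∀ x, E (E x) = E x) ∧
      (∀ f ∈ V, E f = f) ∧
      (∀ g ∈ W', E g = 0) := by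
  have hvV : ∀ k, v k ∈ V := fun k => hv ▸ Submodule.subset_span ⟨k, rfl⟩
  have humem : ∀ i, u i ∈ (W'ᗮ ⊓ (V ⊔ W') : Submodule ℂ H) := fun i =>
    (hu i) ▸ (Submodule.orthogonalProjection (W'ᗮ ⊓ (V ⊔ W') : Submodule ℂ H) (v i)).2
  have huorth : ∀ i, ∀ g ∈ W', ⟪u i, g⟫ = 0 := fun i g hg =>
    (Submodule.mem_orthogonal' W' (u i)).1 (humem i).1 g hg
  -- v i - u i ∈ W'
  have hsub : ∀ i, v i - u i ∈ W' := by
    intro i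
    have hvS : v i ∈ (V ⊔ W' : Submodule ℂ H) :=
      Submodule.mem_sup_left (hvV i)
    have hdecomp := Submodule.sup_orthogonal_inf_of_hasOrthogonalProjection
      (le_sup_right : W' ≤ V ⊔ W')
    rw [← hdecomp] at hvS
    obtain ⟨b, hb, a, ha, hba⟩ := Submodule.mem_sup.1 hvS
    have hua : u i = a := by
      rw [hu i]
      rw [← Submodule.starProjection_apply]
      apply Submodule.eq_starProjection_of_mem_of_inner_eq_zero ha
      intro y hy
      have hb' : v i - a = b := by rw [← hba]; abel
      rw [hb']
      exact (Submodule.mem_orthogonal W' y).1 hy.1 b hb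
    rw [hua]
    have : v i - a = b := by rw [← hba]; abel
    rw [this]; exact hb
  have hin : ∀ j k, ⟪u j, v k⟫ = G j k := by
    intro j k
    have hvk : v k = u k + (v k - u k) := by abel
    rw [hvk, inner_add_right, huorth j _ (hsub k), add_zero, hG]
  -- G is Hermitian
  have hherm : G.conjTranspose = G := by
    ext i j
    simp only [Matrix.conjTranspose_apply, hG]
    exact inner_conj_symm (u i) (u j)
  -- u is linearly independent
  have huli : LinearIndependent ℂ u := by
    rw [Fintype.linearIndependent_iff] at hvli ⊢
    intro c hc
    have hsplit : ∑ i, c i • v i = (∑ i, c i • (v i - u i)) + ∑ i, c i • u i := by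
      rw [← Finset.sum_add_distrib]
      congr 1; ext i; rw [smul_sub]; abel
    have hVmem : ∑ i, c i • v i ∈ V :=
      Submodule.sum_mem _ fun i _ => Submodule.smul_mem _ _ (hvV i)
    have hWmem : ∑ i, c i • v i ∈ W' := by
      rw [hsplit, hc, add_zero]
      exact Submodule.sum_mem _ fun i _ => Submodule.smul_mem _ _ (hsub i)
    have : ∑ i, c i • v i = 0 := by
      have : ∑ i, c i • v i ∈ V ⊓ W' := ⟨hVmem, hWmem⟩
      rwa [hdisj, Submodule.mem_bot] at this
    exact hvli c this
  -- G is invertible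
  have hGker : ∀ c : Fin M → ℂ, G.mulVec c = 0 → c = 0 := by
    intro c hc0
    have hz : ∀ i, ⟪u i, ∑ j, c j • u j⟫ = 0 := by
      intro i
      have := congrFun hc0 i
      simp only [Matrix.mulVec, dotProduct, hG, Pi.zero_apply] at this
      rw [inner_sum]
      simp only [inner_smul_right]
      rw [← this]
      congr 1; ext j; ring
    have hzz : (∑ i, c i • u i) = 0 := by
      rw [← inner_self_eq_zero (𝕜 := ℂ), sum_inner]
      simp only [inner_smul_left]
      simp [hz]
    have := Fintype.linearIndependent_iff.1 huli c hzz
    ext i; exact this i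
  have hGunit : IsUnit G := by
    rw [← Matrix.mulVec_injective_iff_isUnit]
    intro a b hab
    have : G.mulVec (a - b) = 0 := by
      rw [Matrix.mulVec_sub, hab, sub_self]
    have := hGker _ this
    ext i
    have := congrFun this i
    simpa [sub_eq_zero] using this
  have hGdet : IsUnit G.det := (Matrix.isUnit_iff_isUnit_det G).1 hGunit
  have hGinv : G⁻¹ * G = 1 := Matrix.nonsing_inv_mul G hGdet
  -- conj (G⁻¹ j i) = G⁻¹ i j
  have hinvherm : ∀ i j, (starRingEnd ℂ) (G⁻¹ j i) = G⁻¹ i j := by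
    intro i j
    have h1 : (G⁻¹).conjTranspose = G⁻¹ := by
      rw [Matrix.conjTranspose_nonsing_inv, hherm]
    have := congrFun (congrFun h1 i) j
    rwa [Matrix.conjTranspose_apply] at this
  -- key computation
  have hwv : ∀ i k, ⟪w i, v k⟫ = (1 : Matrix (Fin M) (Fin M) ℂ) i k := by
    intro i k
    rw [hw, sum_inner]
    simp only [inner_smul_left, hin, hinvherm]
    rw [← Matrix.mul_apply, hGinv]
  have hEvk : ∀ k, E (v k) = v k := by
    intro k
    rw [hE]
    simp only [hwv, Matrix.one_apply, ite_smul, one_smul, zero_smul]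
    rw [Finset.sum_ite_eq' Finset.univ k v]
    simp
  -- E acts as identity on V
  have hEid : ∀ f ∈ V, E f = f := by
    intro f hf
    rw [← hv] at hf
    induction hf using Submodule.span_induction with
    | mem x hx => obtain ⟨k, rfl⟩ := hx; exact hEvk k
    | zero => rw [hE]; simp
    | add x y hx hy ihx ihy =>
        rw [hE]
        simp only [inner_add_right, add_smul, Finset.sum_add_distrib]
        rw [← hE x, ← hE y, ihx, ihy]
    | smul c x hx ih =>
        rw [hE]
        simp only [inner_smul_right, mul_smul]
        rw [← Finset.smul_sum, ← hE x, ih]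
  -- E vanishes on W'
  have hE0 : ∀ g ∈ W', E g = 0 := by
    intro g hg
    rw [hE]
    apply Finset.sum_eq_zero
    intro i _
    have : ⟪w i, g⟫ = 0 := by
      rw [hw, sum_inner]
      apply Finset.sum_eq_zero
      intro j _
      rw [inner_smul_left, huorth j g hg, mul_zero]
    rw [this, zero_smul]
  refine ⟨?_, hEid, hE0⟩
  intro x
  apply hEid
  rw [hE]
  exact Submodule.sum_mem _ fun i _ => Submodule.smul_mem _ _ (hvV i)
end

section
/- (Property 1) Let H be a finite-dimensional complex inner product space, V and W' subspaces with V ∩ W' = {0}, S = V + W', W the orthogonal complement of W' in S, and P_W the orthogonal projection onto W. Let v_1, …, v_M be a basis of V, u_i = P_W v_i, G the Gram matrix G_{ij} = ⟨u_i, u_j⟩, w_i = Σ_j (G⁻¹)_{ji} u_j, and E_{V W'} x = Σ_i ⟨w_i, x⟩ v_i the oblique projector onto V along W'. Then P_W ∘ E_{V W'} = P_W as linear maps on S, i.e., P_W(E_{V W'} f) = P_W f for every f ∈ S. -/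
open scoped ComplexInnerProductSpace

/-- Property 1: With the oblique projector
`E_{V W'} x = ∑ i ⟨w_i, x⟩ • v_i` built from a basis `v` of `V`, `u_i = P_W v_i`, the
Gram matrix `G` and `w_i = ∑ j (G⁻¹) j i • u_j`, one has `P_W ∘ E_{V W'} = P_W` on
`S = V ⊔ W'`, i.e. `P_W (E f) = P_W f` for every `f ∈ S`. -/
theorem stmt_6 {H : Type*} [NormedAddCommGroup H] [InnerProductSpace ℂ H]
    [FiniteDimensional ℂ H] (V W' : Submodule ℂ H) (hdisj : V ⊓ W' = ⊥)
    {M : ℕ} (v : Fin M → H) (hvli : LinearIndependent ℂ v)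
    (hv : Submodule.span ℂ (Set.range v) = V)
    (u : Fin M → H)
    (hu : ∀ i, u i =
      (Submodule.orthogonalProjectionOnto (W'ᗮ ⊓ (V ⊔ W') : Submodule ℂ H) (v i) : H))
    (G : Matrix (Fin M) (Fin M) ℂ) (hG : ∀ i j, G i j = ⟪u i, u j⟫)
    (w : Fin M → H) (hw : ∀ i, w i = ∑ j, G⁻¹ j i • u j)
    (E : H → H) (hE : ∀ x, E x = ∑ i, ⟪w i, x⟫ • v i) :
    ∀ f ∈ (V ⊔ W' : Submodule ℂ H),
      (Submodule.orthogonalProjectionOnto (W'ᗮ ⊓ (V ⊔ W') : Submodule ℂ H) (E f) : H) =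
        (Submodule.orthogonalProjectionOnto (W'ᗮ ⊓ (V ⊔ W') : Submodule ℂ H) f : H) := by
  intro f hf
  set W : Submodule ℂ H := W'ᗮ ⊓ (V ⊔ W') with hWdef
  have hWle : W ≤ W'ᗮ := inf_le_left
  have hW'W : W' ≤ Wᗮ :=
    (Submodule.le_orthogonal_orthogonal W').trans (Submodule.orthogonal_le hWle)
  have humem : ∀ i, u i ∈ W := fun i => (hu i) ▸ Submodule.coe_mem _
  -- elements of S orthogonal to W lie in W'
  have hkey : ∀ x ∈ (V ⊔ W' : Submodule ℂ H), x ∈ Wᗮ → x ∈ W' := by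
    intro x hxS hxW
    have hsup : W' ⊔ W = (V ⊔ W' : Submodule ℂ H) :=
      Submodule.sup_orthogonal_inf_of_hasOrthogonalProjection le_sup_right
    rw [← hsup] at hxS
    obtain ⟨a, ha, b, hb, rfl⟩ := Submodule.mem_sup.1 hxS
    have hb0 : b = 0 := by
      have h1 : ⟪b, b⟫ = 0 := by
        have h2 : ⟪b, a + b⟫ = 0 := (Submodule.mem_orthogonal _ _).1 hxW b hb
        have h3 : ⟪b, a⟫ = 0 := (Submodule.mem_orthogonal _ _).1 (hW'W ha) b hb
        rw [inner_add_right, h3, zero_add] at h2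
        exact h2
      exact inner_self_eq_zero.1 h1
    rw [hb0, add_zero]
    exact ha
  -- linear independence of u
  have huli : LinearIndependent ℂ u := by
    rw [Fintype.linearIndependent_iff]
    intro g hg
    set x := ∑ i, g i • v i with hx
    have hxV : x ∈ V := by
      rw [← hv]
      exact Submodule.sum_mem _ fun i _ =>
        Submodule.smul_mem _ _ (Submodule.subset_span ⟨i, rfl⟩)
    have hPx : (Submodule.orthogonalProjectionOnto W x : H) = ∑ i, g i • u i := by
      rw [hx, map_sum]
      push_cast
      refine Finset.sum_congr rfl fun i _ => ?_
      rw [map_smul]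
      push_cast
      rw [hu i]
    have hxWo : x ∈ Wᗮ := by
      rw [← Submodule.orthogonalProjectionOnto_eq_zero_iff]
      have : (Submodule.orthogonalProjectionOnto W x : H) = 0 := by rw [hPx, hg]
      exact Subtype.coe_injective this
    have hxW' : x ∈ W' := hkey x (Submodule.mem_sup_left hxV) hxWo
    have hx0 : x = 0 := by
      have : x ∈ V ⊓ W' := ⟨hxV, hxW'⟩
      rwa [hdisj, Submodule.mem_bot] at this
    exact Fintype.linearIndependent_iff.1 hvli g (hx0 ▸ rfl)
  -- Gram matrix is invertible
  have hdet : IsUnit G.det := by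
    rw [isUnit_iff_ne_zero]
    intro h0
    obtain ⟨c, hc, hGc⟩ := (Matrix.exists_mulVec_eq_zero_iff).2 h0
    set y := ∑ j, c j • u j with hy
    have hiy : ∀ i, ⟪u i, y⟫ = 0 := by
      intro i
      have := congrFun hGc i
      simp only [Matrix.mulVec, dotProduct, hG, Pi.zero_apply] at this
      rw [hy, inner_sum]
      simp only [inner_smul_right]
      rw [← this]
      exact Finset.sum_congr rfl fun j _ => mul_comm _ _
    have hy0 : y = 0 := by
      have : ⟪y, y⟫ = 0 := by
        rw [hy, sum_inner]
        simp only [inner_smul_left]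
        rw [← hy]
        exact Finset.sum_eq_zero fun i _ => by rw [hiy i, mul_zero]
      exact inner_self_eq_zero.1 this
    exact hc (funext fun i =>
      Fintype.linearIndependent_iff.1 huli c (hy.symm.trans hy0) i)
  have hGinvG : G⁻¹ * G = 1 := Matrix.nonsing_inv_mul G hdet
  have hGh : G.IsHermitian := by
    ext i j
    rw [Matrix.conjTranspose_apply, hG, hG, RCLike.star_def]
    exact inner_conj_symm _ _
  have hGinvh : G⁻¹.IsHermitian := hGh.inv
  -- decompose f
  obtain ⟨fv, hfv, fw, hfw, rfl⟩ := Submodule.mem_sup.1 hf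
  rw [← hv] at hfv
  obtain ⟨c, hc⟩ := (Submodule.mem_span_range_iff_exists_fun ℂ).1 hfv
  have hPf : (Submodule.orthogonalProjectionOnto W (fv + fw) : H) = ∑ k, c k • u k := by
    rw [map_add, Submodule.orthogonalProjectionOnto_apply_of_mem_orthogonal (hW'W hfw),
      add_zero, ← hc, map_sum]
    push_cast
    refine Finset.sum_congr rfl fun k _ => ?_
    rw [map_smul]
    push_cast
    rw [hu k]
  have hwmem : ∀ i, w i ∈ W := fun i => (hw i) ▸
    (Submodule.sum_mem _ fun j _ => Submodule.smul_mem _ _ (humem j))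
  have hcoef : ∀ i, ⟪w i, fv + fw⟫ = c i := by
    intro i
    have hsub : fv + fw - (Submodule.orthogonalProjectionOnto W (fv + fw) : H) ∈ Wᗮ :=
      Submodule.sub_starProjection_mem_orthogonal _
    have h1 : ⟪w i, fv + fw - (Submodule.orthogonalProjectionOnto W (fv + fw) : H)⟫ = 0 :=
      (Submodule.mem_orthogonal _ _).1 hsub (w i) (hwmem i)
    rw [inner_sub_right, sub_eq_zero] at h1
    rw [h1, hPf, hw i, sum_inner]
    have : ∀ j, ⟪G⁻¹ j i • u j, ∑ k, c k • u k⟫ = ∑ k, G⁻¹ i j * (G j k * c k) := by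
      intro j
      rw [inner_smul_left, inner_sum]
      simp only [inner_smul_right]
      rw [show (starRingEnd ℂ) (G⁻¹ j i) = G⁻¹ i j from hGinvh.apply i j, Finset.mul_sum]
      exact Finset.sum_congr rfl fun k _ => by rw [← hG]; ring
    simp only [this]
    rw [Finset.sum_comm]
    have : ∀ k, ∑ j, G⁻¹ i j * (G j k * c k) = (G⁻¹ * G) i k * c k := by
      intro k
      rw [Matrix.mul_apply, Finset.sum_mul]
      exact Finset.sum_congr rfl fun j _ => by ring
    simp only [this, hGinvG, Matrix.one_apply]
    simp [Finset.sum_ite_eq, eq_comm]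
  -- conclude
  rw [hE, map_sum, hPf]
  push_cast
  refine Finset.sum_congr rfl fun i _ => ?_
  rw [map_smul]
  push_cast
  rw [hu i, hcoef i]
end

section
/- (Property 2) Let H be a finite-dimensional complex inner product space, V and W' subspaces with V ∩ W' = {0}, S = V + W', W the orthogonal complement of W' in S, P_W the orthogonal projection onto W, and E_{V W'} the oblique projector onto V along W'. Then for every signal f ∈ S, the vector g = E_{V W'} f is the unique element of V satisfying P_W f = P_W g; that is, if g ∈ V and P_W f = P_W g, then g = E_{V W'} f. -/
open scoped ComplexInnerProductSpace

/-- Property 2: Let `E` be the oblique projector onto `V` along `W'`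
(a linear operator acting as the identity on `V` and vanishing on `W'`). Then for every
`f ∈ S = V ⊔ W'`, `g = E f` is the unique element of `V` with `P_W f = P_W g`: it lies
in `V`, satisfies `P_W f = P_W (E f)`, and any `g ∈ V` with `P_W f = P_W g` equals `E f`. -/
theorem stmt_8 {H : Type*} [NormedAddCommGroup H] [InnerProductSpace ℂ H]
    [FiniteDimensional ℂ H] (V W' : Submodule ℂ H) (hdisj : V ⊓ W' = ⊥)
    (E : H →ₗ[ℂ] H) (hEid : ∀ x ∈ V, E x = x) (hEker : ∀ x ∈ W', E x = 0) :
    ∀ f ∈ (V ⊔ W' : Submodule ℂ H),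
      E f ∈ V ∧
      (Submodule.orthogonalProjection (W'ᗮ ⊓ (V ⊔ W') : Submodule ℂ H) f : H) =
        (Submodule.orthogonalProjection (W'ᗮ ⊓ (V ⊔ W') : Submodule ℂ H) (E f) : H) ∧
      ∀ g ∈ V,
        (Submodule.orthogonalProjection (W'ᗮ ⊓ (V ⊔ W') : Submodule ℂ H) f : H) =
          (Submodule.orthogonalProjection (W'ᗮ ⊓ (V ⊔ W') : Submodule ℂ H) g : H) →
        g = E f := by
  intro f hf
  set K : Submodule ℂ H := W'ᗮ ⊓ (V ⊔ W') with hK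
  -- W' ≤ Kᗮ
  have hW'K : W' ≤ Kᗮ :=
    le_trans (Submodule.le_orthogonal_orthogonal W')
      (Submodule.orthogonal_le inf_le_left)
  obtain ⟨v, hv, w, hw, rfl⟩ := Submodule.mem_sup.mp hf
  have hEf : E (v + w) = v := by
    rw [map_add, hEid v hv, hEker w hw, add_zero]
  have hEfV : E (v + w) ∈ V := by rw [hEf]; exact hv
  have hPw : Submodule.orthogonalProjection K w = 0 :=
    Submodule.orthogonalProjectionOnto_eq_zero_iff.mpr (hW'K hw)
  have hproj : (Submodule.orthogonalProjection K (v + w) : H) =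
      (Submodule.orthogonalProjection K (E (v + w)) : H) := by
    rw [hEf, map_add, hPw, add_zero]
  refine ⟨hEfV, hproj, ?_⟩
  intro g hg hgp
  -- x := g - E f
  set x := g - E (v + w) with hx
  have hxV : x ∈ V := Submodule.sub_mem V hg hEfV
  have hPx : Submodule.orthogonalProjection K x = 0 := by
    have : (Submodule.orthogonalProjection K g : H) = (Submodule.orthogonalProjection K (E (v + w)) : H) := by
      rw [← hgp, hproj]
    rw [hx, map_sub]
    ext
    simpa [sub_eq_zero] using this
  have hxKperp : x ∈ Kᗮ := Submodule.orthogonalProjectionOnto_eq_zero_iff.mp hPx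
  -- decompose x using projection onto W'
  set q : H := (Submodule.orthogonalProjection W' x : H) with hq
  have hqW' : q ∈ W' := (Submodule.orthogonalProjection W' x).2
  have hxqK : x - q ∈ K := by
    refine Submodule.mem_inf.mpr ⟨Submodule.sub_starProjection_mem_orthogonal (K := W') x, ?_⟩
    exact Submodule.sub_mem _ (Submodule.mem_sup_left hxV) (Submodule.mem_sup_right hqW')
  have hxqKperp : x - q ∈ Kᗮ := Submodule.sub_mem _ hxKperp (hW'K hqW')
  have hxq : x = q := by
    have : x - q ∈ K ⊓ Kᗮ := Submodule.mem_inf.mpr ⟨hxqK, hxqKperp⟩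
    rw [Submodule.inf_orthogonal_eq_bot, Submodule.mem_bot] at this
    exact sub_eq_zero.mp this
  have hxW' : x ∈ W' := hxq ▸ hqW'
  have : x ∈ V ⊓ W' := Submodule.mem_inf.mpr ⟨hxV, hxW'⟩
  rw [hdisj, Submodule.mem_bot] at this
  exact sub_eq_zero.mp this
end

section
/- (Backward adaptation of measurement vectors) Let H be a finite-dimensional complex inner product space, u_1, …, u_k linearly independent with W_k = span{u_1,…,u_k}, and let w_1^k, …, w_k^k ∈ W_k satisfy ⟨w_i^k, u_j⟩ = δ_{ij}. Fix an index j and let W_{k∖j} = span{u_i : i ≠ j}. Then the vectors defined by w_i^{k∖j} = w_i^k − w_j^k ⟨w_j^k, w_i^k⟩ / ‖w_j^k‖², for i ≠ j, all lie in W_{k∖j} and satisfy ⟨w_i^{k∖j}, u_m⟩ = δ_{im} for all i, m ≠ j; i.e., they are the measurement vectors for the oblique projector after removing the atom indexed by j. -/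
open scoped ComplexInnerProductSpace

/-- Backward adaptation of measurement vectors: For linearly independent
`u_1,…,u_k` spanning `W_k`, dual vectors `w_i^k ∈ W_k` with `⟨w_i^k, u_j⟩ = δ_{ij}`, a
fixed index `j`, and `W_{k∖j} = span{u_i : i ≠ j}`, the vectors
`w_i^{k∖j} = w_i^k − (⟨w_j^k, w_i^k⟩/‖w_j^k‖²) • w_j^k` (for `i ≠ j`) all lie in
`W_{k∖j}` and satisfy `⟨w_i^{k∖j}, u_m⟩ = δ_{im}` for all `i, m ≠ j`. -/
theorem stmt_12 {H : Type*} [NormedAddCommGroup H] [InnerProductSpace ℂ H]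
    [FiniteDimensional ℂ H] {k : ℕ}
    (u : Fin k → H) (huli : LinearIndependent ℂ u)
    (Wk : Submodule ℂ H) (hWk : Wk = Submodule.span ℂ (Set.range u))
    (w : Fin k → H) (hwmem : ∀ i, w i ∈ Wk)
    (hwbi : ∀ i j, ⟪w i, u j⟫ = if i = j then (1 : ℂ) else 0)
    (j : Fin k)
    (Wkj : Submodule ℂ H) (hWkj : Wkj = Submodule.span ℂ (u '' {i | i ≠ j}))
    (w' : Fin k → H)
    (hw' : ∀ i, w' i = w i - (⟪w j, w i⟫ / ((‖w j‖ : ℂ) ^ 2)) • w j) :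
    (∀ i, i ≠ j → w' i ∈ Wkj) ∧
      ∀ i m, i ≠ j → m ≠ j → ⟪w' i, u m⟫ = if i = m then (1 : ℂ) else 0 := by

  have hwj0 : w j ≠ 0 := by
    intro h
    have h1 := hwbi j j
    simp [h] at h1
  have hnorm : ((‖w j‖ : ℂ) ^ 2) ≠ 0 := by
    have : (‖w j‖ : ℂ) ≠ 0 := by exact_mod_cast norm_ne_zero_iff.mpr hwj0
    exact pow_ne_zero 2 this
  constructor
  · intro i hij
    have hmemk : w' i ∈ Wk := by
      rw [hw' i]
      exact Wk.sub_mem (hwmem i) (Wk.smul_mem _ (hwmem j))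
    rw [hWk, Submodule.mem_span_range_iff_exists_fun] at hmemk
    obtain ⟨c, hc⟩ := hmemk
    have hcj : c j = 0 := by
      have horth : ⟪w j, w' i⟫ = 0 := by
        rw [hw' i, inner_sub_right, inner_smul_right,
          inner_self_eq_norm_sq_to_K]
        field_simp
        simp [hwj0]
      have hcoef : ⟪w j, w' i⟫ = c j := by
        rw [← hc, inner_sum]
        simp only [inner_smul_right, hwbi, mul_ite, mul_one, mul_zero]
        simp
      rw [hcoef] at horth
      exact horth
    rw [hWkj, ← hc]
    refine Submodule.sum_mem _ (fun i' _ => ?_)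
    by_cases h : i' = j
    · simp [h, hcj]
    · exact Submodule.smul_mem _ _ (Submodule.subset_span ⟨i', h, rfl⟩)
  · intro i m hij hmj
    have hjm : ⟪w j, u m⟫ = 0 := by
      rw [hwbi j m, if_neg (fun h => hmj h.symm)]
    rw [hw' i, inner_sub_left, inner_smul_left, hjm, mul_zero, sub_zero, hwbi i m]
end

section
/- (Proposition 1) Let H be a finite-dimensional complex inner product space, W a subspace, and {u_n : n ∈ J} ⊆ W a finite family of vectors. Let J_k ⊆ J be a set of already selected indices with W_k = span{u_ℓ : ℓ ∈ J_k}, and for each n ∈ J ∖ J_k set γ_n = u_n − P_{W_k} u_n and W_{k+1}(n) = W_k + span{u_n}. Then for any signal f ∈ H, an index ℓ_{k+1} ∈ J ∖ J_k with γ_{ℓ_{k+1}} ≠ 0 minimizes ‖P_W f − P_{W_{k+1}(n)} f‖² over all n ∈ J ∖ J_k with γ_n ≠ 0 if and only if it maximizes |⟨γ_n, f⟩| / ‖γ_n‖ over the same set of indices. -/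
open scoped ComplexInnerProductSpace

/-- Proposition 1: With `W` a subspace, a finite family of atoms
`u_n ∈ W` (`n ∈ J`), already selected indices `J_k ⊆ J` determining
`W_k = span{u_ℓ : ℓ ∈ J_k}`, residuals `γ_n = u_n − P_{W_k} u_n`, and enlarged spaces
`W_{k+1}(n) = W_k + span{u_n}`: for a signal `f`, an index `ℓ ∈ J ∖ J_k` with
`γ_ℓ ≠ 0` minimizes `‖P_W f − P_{W_{k+1}(n)} f‖²` over all `n ∈ J ∖ J_k` with
`γ_n ≠ 0` if and only if it maximizes `|⟨γ_n, f⟩|/‖γ_n‖` over the same set. -/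
theorem stmt_16 {H : Type*} [NormedAddCommGroup H] [InnerProductSpace ℂ H]
    [FiniteDimensional ℂ H] (W : Submodule ℂ H)
    {ι : Type*} [DecidableEq ι] (J : Finset ι) (u : ι → H) (huW : ∀ n ∈ J, u n ∈ W)
    (Jk : Finset ι) (hJk : Jk ⊆ J)
    (Wk : Submodule ℂ H) (hWk : Wk = Submodule.span ℂ (u '' ↑Jk))
    (γ : ι → H) (hγ : ∀ n, γ n = u n - (Submodule.orthogonalProjectionOnto Wk (u n) : H))
    (Wk1 : ι → Submodule ℂ H) (hWk1 : ∀ n, Wk1 n = Wk ⊔ Submodule.span ℂ {u n})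
    (f : H) (ℓ : ι) (hℓ : ℓ ∈ J \ Jk) (hγℓ : γ ℓ ≠ 0) :
    ((∀ n ∈ J \ Jk, γ n ≠ 0 →
        ‖(Submodule.orthogonalProjectionOnto W f : H) - (Submodule.orthogonalProjectionOnto (Wk1 ℓ) f : H)‖ ^ 2 ≤
          ‖(Submodule.orthogonalProjectionOnto W f : H) - (Submodule.orthogonalProjectionOnto (Wk1 n) f : H)‖ ^ 2) ↔
      (∀ n ∈ J \ Jk, γ n ≠ 0 →
        ‖⟪γ n, f⟫‖ / ‖γ n‖ ≤ ‖⟪γ ℓ, f⟫‖ / ‖γ ℓ‖)) := by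
  -- Wk ≤ W
  have hWkW : Wk ≤ W := by
    rw [hWk]
    apply Submodule.span_le.2
    rintro _ ⟨x, hx, rfl⟩
    exact huW x (hJk hx)
  -- γ n ∈ Wkᗮ
  have hγmem : ∀ n, γ n ∈ Wkᗮ := fun n => by
    rw [hγ]; exact Submodule.sub_starProjection_mem_orthogonal (K := Wk) (u n)
  -- Wk1 n = Wk ⊔ span {γ n}
  have hWk1' : ∀ n, Wk1 n = Wk ⊔ Submodule.span ℂ {γ n} := by
    intro n
    rw [hWk1]
    apply le_antisymm
    · apply sup_le le_sup_left
      rw [Submodule.span_le, Set.singleton_subset_iff]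
      have : u n = (Submodule.orthogonalProjectionOnto Wk (u n) : H) + γ n := by rw [hγ]; abel
      rw [this]
      exact Submodule.add_mem _ (Submodule.mem_sup_left (Submodule.orthogonalProjectionOnto Wk (u n)).2)
        (Submodule.mem_sup_right (Submodule.mem_span_singleton_self _))
    · apply sup_le le_sup_left
      rw [Submodule.span_le, Set.singleton_subset_iff, hγ]
      exact Submodule.sub_mem _
        (Submodule.mem_sup_right (Submodule.mem_span_singleton_self _))
        (Submodule.mem_sup_left (Submodule.orthogonalProjectionOnto Wk (u n)).2)
  -- key: projection formula
  have key : ∀ n ∈ J \ Jk, γ n ≠ 0 →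
      ‖(Submodule.orthogonalProjectionOnto W f : H) - (Submodule.orthogonalProjectionOnto (Wk1 n) f : H)‖ ^ 2 =
        ‖(Submodule.orthogonalProjectionOnto W f : H) - (Submodule.orthogonalProjectionOnto Wk f : H)‖ ^ 2 -
          (‖⟪γ n, f⟫‖ / ‖γ n‖) ^ 2 := by
    intro n hn hγn
    have hnJ : n ∈ J := (Finset.mem_sdiff.1 hn).1
    have hWk1W : Wk1 n ≤ W := by
      rw [hWk1]
      exact sup_le hWkW (by rw [Submodule.span_le, Set.singleton_subset_iff]; exact huW n hnJ)
    set c : ℂ := ⟪γ n, f⟫ / (‖γ n‖ : ℂ) ^ 2 with hc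
    -- projection onto Wk1 n
    have hproj : (Submodule.orthogonalProjectionOnto (Wk1 n) f : H) =
        (Submodule.orthogonalProjectionOnto Wk f : H) + c • γ n := by
      apply Submodule.eq_starProjection_of_mem_orthogonal
      · rw [hWk1' n]
        exact Submodule.add_mem _ (Submodule.mem_sup_left (Submodule.orthogonalProjectionOnto Wk f).2)
          (Submodule.mem_sup_right (Submodule.smul_mem _ _ (Submodule.mem_span_singleton_self _)))
      · rw [hWk1' n, ← Submodule.inf_orthogonal, Submodule.mem_inf]
        constructor
        · have h1 : f - (Submodule.orthogonalProjectionOnto Wk f : H) ∈ Wkᗮ :=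
            Submodule.sub_starProjection_mem_orthogonal (K := _) f
          have h2 : c • γ n ∈ Wkᗮ := Submodule.smul_mem _ _ (hγmem n)
          have : f - ((Submodule.orthogonalProjectionOnto Wk f : H) + c • γ n) =
              (f - (Submodule.orthogonalProjectionOnto Wk f : H)) - c • γ n := by abel
          rw [this]
          exact Submodule.sub_mem _ h1 h2
        · rw [Submodule.mem_orthogonal]
          intro w hw
          obtain ⟨a, rfl⟩ := Submodule.mem_span_singleton.1 hw
          have hinner : ⟪γ n, (Submodule.orthogonalProjectionOnto Wk f : H)⟫ = 0 := by
            have := (Submodule.mem_orthogonal' Wk (γ n)).1 (hγmem n)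
            exact this _ (Submodule.orthogonalProjectionOnto Wk f).2
          have h0c : (‖γ n‖ : ℂ) ≠ 0 := by
            exact_mod_cast norm_ne_zero_iff.2 hγn
          rw [inner_smul_left, inner_sub_right, inner_add_right, hinner, inner_smul_right,
            inner_self_eq_norm_sq_to_K, hc]
          field_simp
          ring_nf
          exact sub_self _
    -- Pythagoras
    have hx : (Submodule.orthogonalProjectionOnto W f : H) - (Submodule.orthogonalProjectionOnto Wk f : H) =
        ((Submodule.orthogonalProjectionOnto W f : H) - (Submodule.orthogonalProjectionOnto (Wk1 n) f : H)) + c • γ n := by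
      rw [hproj]; abel
    have horth : ⟪(Submodule.orthogonalProjectionOnto W f : H) - (Submodule.orthogonalProjectionOnto (Wk1 n) f : H),
        c • γ n⟫ = 0 := by
      have hmem : (Submodule.orthogonalProjectionOnto W f : H) - (Submodule.orthogonalProjectionOnto (Wk1 n) f : H) ∈
          (Wk1 n)ᗮ := by
        have h1 : f - (Submodule.orthogonalProjectionOnto (Wk1 n) f : H) ∈ (Wk1 n)ᗮ :=
          Submodule.sub_starProjection_mem_orthogonal (K := _) f
        have h2 : f - (Submodule.orthogonalProjectionOnto W f : H) ∈ (Wk1 n)ᗮ :=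
          Submodule.orthogonal_le hWk1W (Submodule.sub_starProjection_mem_orthogonal (K := _) f)
        have : (Submodule.orthogonalProjectionOnto W f : H) - (Submodule.orthogonalProjectionOnto (Wk1 n) f : H) =
            (f - (Submodule.orthogonalProjectionOnto (Wk1 n) f : H)) - (f - (Submodule.orthogonalProjectionOnto W f : H)) := by
          abel
        rw [this]
        exact Submodule.sub_mem _ h1 h2
      have hy : c • γ n ∈ Wk1 n := by
        rw [hWk1' n]
        exact Submodule.mem_sup_right (Submodule.smul_mem _ _ (Submodule.mem_span_singleton_self _))
      exact (Submodule.mem_orthogonal' _ _).1 hmem _ hy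
    have hpyth := norm_add_sq_eq_norm_sq_add_norm_sq_of_inner_eq_zero _ _ horth
    rw [← hx] at hpyth
    have hnc : ‖c • γ n‖ = ‖⟪γ n, f⟫‖ / ‖γ n‖ := by
      rw [norm_smul, hc]
      have h0 : ‖γ n‖ ≠ 0 := norm_ne_zero_iff.2 hγn
      rw [norm_div, norm_pow, Complex.norm_real, norm_norm]
      field_simp
    rw [hnc] at hpyth
    linarith
  -- conclude
  constructor
  · intro h n hn hγn
    have h1 := h n hn hγn
    rw [key n hn hγn, key ℓ hℓ hγℓ] at h1
    have h2 : (‖⟪γ n, f⟫‖ / ‖γ n‖) ^ 2 ≤ (‖⟪γ ℓ, f⟫‖ / ‖γ ℓ‖) ^ 2 := by linarith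
    exact le_of_pow_le_pow_left₀ two_ne_zero (by positivity) h2
  · intro h n hn hγn
    have h1 := h n hn hγn
    rw [key n hn hγn, key ℓ hℓ hγℓ]
    have h2 : (‖⟪γ n, f⟫‖ / ‖γ n‖) ^ 2 ≤ (‖⟪γ ℓ, f⟫‖ / ‖γ ℓ‖) ^ 2 :=
      pow_le_pow_left₀ (by positivity) h1 2
    linarith
end
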